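/- Let k ≥ 1. Among the 2k-bit integers with exactly k ones listed in increasing order m(1) < m(2) < ..., for any consecutive pair the number of ones n in the least significant block of ones of m(t) satisfies 1 ≤ n ≤ k, and the sum over all consecutive transitions of n (the per-step replacement cost) plus the final index's block size equals ∑_{n=1}^{k} n · C(2k−n, k−n+1). -/

import Mathlib

/-- The length of the least significant block of ones in the binary representation
of `x` (and `0` for `x = 0`): shift away the trailing zeros, then count trailing ones. -/
def lowBlockLen (x : ℕ) : ℕ := padicValNat 2 (x / 2 ^ (padicValNat 2 x) + 1)

open Finset


lemma testBit_iff (x : ℕ) : ∀ i, x.testBit i = true ↔ i ∈ x.bitIndices := by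
  induction x using Nat.binaryRec with
  | zero => simp
  | bit b n ih =>
    intro i
    cases i with
    | zero =>
      rw [Nat.testBit_bit_zero]
      cases b <;> simp [Nat.bitIndices_bit_true, Nat.bitIndices_bit_false]
    | succ j =>
      rw [Nat.testBit_bit_succ, ih j]
      cases b <;> simp [Nat.bitIndices_bit_true, Nat.bitIndices_bit_false]

lemma sum_range_two_pow (M : ℕ) : ∑ i ∈ range M, 2 ^ i = 2 ^ M - 1 := by
  induction M with
  | zero => simp
  | succ m ih =>
    have h := Nat.one_le_two_pow (n := m)
    rw [Finset.sum_range_succ, ih, pow_succ]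
    omega

lemma lt_two_pow_iff_subset {x M : ℕ} : x < 2 ^ M ↔ x.bitIndices.toFinset ⊆ range M := by
  constructor
  · intro hx i hi
    rw [List.mem_toFinset] at hi
    exact mem_range.mpr ((Nat.pow_lt_pow_iff_right one_lt_two).mp
      (lt_of_le_of_lt (Nat.two_pow_le_of_mem_bitIndices hi) hx))
  · intro h
    have h1 : x = ∑ i ∈ x.bitIndices.toFinset, 2 ^ i := (Finset.twoPowSum_toFinset_bitIndices x).symm
    have h2 : ∑ i ∈ x.bitIndices.toFinset, 2 ^ i ≤ ∑ i ∈ range M, 2 ^ i :=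
      Finset.sum_le_sum_of_subset h
    have h3 := sum_range_two_pow M
    have h4 := Nat.one_le_two_pow (n := M)
    omega

lemma bitset_def {x M : ℕ} (hx : x < 2 ^ M) :
    (range M).filter (fun i => x.testBit i) = x.bitIndices.toFinset := by
  ext i
  simp only [mem_filter, mem_range, List.mem_toFinset]
  constructor
  · rintro ⟨-, h⟩
    exact (testBit_iff x i).mp h
  · intro h
    exact ⟨mem_range.mp (lt_two_pow_iff_subset.mp hx (List.mem_toFinset.mpr h)),
      (testBit_iff x i).mpr h⟩


def cntSet (M r : ℕ) : Finset ℕ :=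
  (Finset.range (2 ^ M)).filter (fun z : ℕ =>
    ((Finset.range M).filter (fun i => z.testBit i)).card = r)

lemma mem_cntSet {M r x : ℕ} :
    x ∈ cntSet M r ↔ x < 2 ^ M ∧ x.bitIndices.toFinset.card = r := by
  unfold cntSet
  simp only [mem_filter, mem_range]
  constructor
  · rintro ⟨h1, h2⟩; exact ⟨h1, by rwa [← bitset_def h1]⟩
  · rintro ⟨h1, h2⟩; exact ⟨h1, by rwa [bitset_def h1]⟩

lemma cntSet_card (M r : ℕ) : (cntSet M r).card = M.choose r := by
  have : (cntSet M r).card = (Finset.powersetCard r (range M)).card := by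
    apply Finset.card_bij' (fun x _ => x.bitIndices.toFinset) (fun s _ => ∑ i ∈ s, 2 ^ i)
    · intro a _; exact Finset.twoPowSum_toFinset_bitIndices a
    · intro s _; exact Finset.toFinset_bitIndices_twoPowSum s
    · intro a ha
      obtain ⟨h1, h2⟩ := mem_cntSet.mp ha
      exact Finset.mem_powersetCard.mpr ⟨lt_two_pow_iff_subset.mp h1, h2⟩
    · intro s hs
      obtain ⟨h1, h2⟩ := Finset.mem_powersetCard.mp hs
      refine mem_cntSet.mpr ⟨?_, ?_⟩
      · rw [lt_two_pow_iff_subset, Finset.toFinset_bitIndices_twoPowSum]; exact h1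
      · rw [Finset.toFinset_bitIndices_twoPowSum]; exact h2
  rw [this, Finset.card_powersetCard, Finset.card_range]


def blockNum (n z u : ℕ) : ℕ := u * 2 ^ (z + n + 1) + (2 ^ n - 1) * 2 ^ z

def blockSet (n z u : ℕ) : Finset ℕ :=
  (range n).image (· + z) ∪ u.bitIndices.toFinset.image (· + (z + n + 1))

lemma blockSet_disj (n z u : ℕ) :
    Disjoint ((range n).image (· + z)) (u.bitIndices.toFinset.image (· + (z + n + 1))) := by
  rw [Finset.disjoint_left]
  rintro a ha hb
  obtain ⟨i, hi, rfl⟩ := Finset.mem_image.mp ha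
  obtain ⟨j, hj, hji⟩ := Finset.mem_image.mp hb
  rw [Finset.mem_range] at hi
  omega

lemma blockSet_sum (n z u : ℕ) : ∑ i ∈ blockSet n z u, 2 ^ i = blockNum n z u := by
  unfold blockSet blockNum
  rw [Finset.sum_union (blockSet_disj n z u), Finset.sum_image (by intro a _ b _ h; simp only at h; omega),
    Finset.sum_image (by intro a _ b _ h; simp only at h; omega)]
  have h1 : ∑ i ∈ range n, 2 ^ (i + z) = (2 ^ n - 1) * 2 ^ z := by
    simp_rw [pow_add, ← Finset.sum_mul, sum_range_two_pow]
  have h2 : ∑ i ∈ u.bitIndices.toFinset, 2 ^ (i + (z + n + 1)) = u * 2 ^ (z + n + 1) := by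
    simp_rw [pow_add, ← Finset.sum_mul, Finset.twoPowSum_toFinset_bitIndices]
  omega

lemma blockSet_card (n z u : ℕ) :
    (blockSet n z u).card = n + u.bitIndices.toFinset.card := by
  unfold blockSet
  rw [Finset.card_union_of_disjoint (blockSet_disj n z u),
    Finset.card_image_of_injective _ (add_left_injective _),
    Finset.card_image_of_injective _ (add_left_injective _), Finset.card_range]

lemma blockNum_bitset (n z u : ℕ) :
    (blockNum n z u).bitIndices.toFinset = blockSet n z u := by
  rw [← blockSet_sum]; exact Finset.toFinset_bitIndices_twoPowSum _

lemma blockNum_eq (n z u : ℕ) :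
    blockNum n z u = 2 ^ z * (u * 2 ^ (n + 1) + (2 ^ n - 1)) := by
  unfold blockNum
  rw [show z + n + 1 = z + (n + 1) by omega, pow_add]
  generalize 2 ^ n - 1 = a
  ring

lemma odd_part (n u : ℕ) (hn : 1 ≤ n) : (u * 2 ^ (n + 1) + (2 ^ n - 1)) % 2 = 1 := by
  have h1 : 2 ∣ u * 2 ^ (n + 1) := Dvd.dvd.mul_left (dvd_pow_self 2 (by omega)) u
  have h2 : 2 ∣ 2 ^ n := dvd_pow_self 2 (by omega)
  have h3 : 1 ≤ 2 ^ n := Nat.one_le_two_pow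
  omega

lemma blockNum_padicVal (n z u : ℕ) (hn : 1 ≤ n) : padicValNat 2 (blockNum n z u) = z := by
  rw [blockNum_eq]
  have hodd := odd_part n u hn
  have hy : u * 2 ^ (n + 1) + (2 ^ n - 1) ≠ 0 := by omega
  rw [padicValNat.mul (pow_ne_zero z two_ne_zero) hy, padicValNat.prime_pow,
    padicValNat.eq_zero_of_not_dvd (by omega), add_zero]

lemma blockNum_lowBlockLen (n z u : ℕ) (hn : 1 ≤ n) : lowBlockLen (blockNum n z u) = n := by
  unfold lowBlockLen
  rw [blockNum_padicVal n z u hn, blockNum_eq,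
    Nat.mul_div_cancel_left _ (pow_pos two_pos z)]
  have h3 : 1 ≤ 2 ^ n := Nat.one_le_two_pow
  have h1 : u * 2 ^ (n + 1) + (2 ^ n - 1) + 1 = 2 ^ n * (2 * u + 1) := by
    have h2 : u * 2 ^ (n + 1) + 2 ^ n = 2 ^ n * (2 * u + 1) := by rw [pow_succ]; ring
    omega
  rw [h1, padicValNat.mul (pow_ne_zero n two_ne_zero) (by omega), padicValNat.prime_pow,
    padicValNat.eq_zero_of_not_dvd (by omega), add_zero]

lemma blockNum_div (n z u : ℕ) (hn : 1 ≤ n) :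
    blockNum n z u / 2 ^ (z + n + 1) = u := by
  unfold blockNum
  rw [mul_comm u, Nat.mul_add_div (pow_pos two_pos _)]
  have h3 : 1 ≤ 2 ^ n := Nat.one_le_two_pow
  have hr : (2 ^ n - 1) * 2 ^ z < 2 ^ (z + n + 1) := by
    calc (2 ^ n - 1) * 2 ^ z < 2 ^ n * 2 ^ z :=
          (Nat.mul_lt_mul_right (pow_pos two_pos z)).mpr (by omega)
    _ ≤ 2 ^ (z + n + 1) := by
        rw [← pow_add]; exact Nat.pow_le_pow_right (by omega) (by omega)
  rw [Nat.div_eq_of_lt hr, add_zero]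


lemma decompose (x : ℕ) (hx : x ≠ 0) :
    x = blockNum (lowBlockLen x) (padicValNat 2 x) (x / 2 ^ (padicValNat 2 x + lowBlockLen x + 1))
      ∧ 1 ≤ lowBlockLen x := by
  set z := padicValNat 2 x with hz
  have hdvd : 2 ^ z ∣ x := pow_padicValNat_dvd
  set y := x / 2 ^ z with hyd
  have hlb : lowBlockLen x = padicValNat 2 (y + 1) := rfl
  have hxy : x = 2 ^ z * y := (Nat.mul_div_cancel' hdvd).symm
  have hy0 : y ≠ 0 := by rintro h; rw [h, mul_zero] at hxy; exact hx hxy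
  have hyval : padicValNat 2 y = 0 := by
    have h := padicValNat.mul (p := 2) (pow_ne_zero z two_ne_zero) hy0
    rw [← hxy, padicValNat.prime_pow, ← hz] at h
    omega
  clear_value z y
  have hyodd : y % 2 = 1 := by
    rcases Nat.mod_two_eq_zero_or_one y with h | h
    · exfalso
      have h1 : 1 ≤ padicValNat 2 y :=
        one_le_padicValNat_of_dvd (n := y) hy0
          (Nat.dvd_of_mod_eq_zero h)
      omega
    · exact h
  rw [hlb]
  set n := padicValNat 2 (y + 1) with hnd
  have hdvd2 : 2 ^ n ∣ y + 1 := pow_padicValNat_dvd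
  set w := (y + 1) / 2 ^ n with hwd
  have hyw : y + 1 = 2 ^ n * w := (Nat.mul_div_cancel' hdvd2).symm
  have hw0 : w ≠ 0 := by rintro h; rw [h, mul_zero] at hyw; omega
  have hwval : padicValNat 2 w = 0 := by
    have h := padicValNat.mul (p := 2) (pow_ne_zero n two_ne_zero) hw0
    rw [← hyw, padicValNat.prime_pow, ← hnd] at h
    omega
  have hn1 : 1 ≤ n := by
    rw [hnd]
    exact one_le_padicValNat_of_dvd (n := y + 1) (by omega)
      (Nat.dvd_of_mod_eq_zero (by omega))
  clear_value n w
  have hwodd : w % 2 = 1 := by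
    rcases Nat.mod_two_eq_zero_or_one w with h | h
    · exfalso
      have h1 : 1 ≤ padicValNat 2 w :=
        one_le_padicValNat_of_dvd (n := w) hw0
          (Nat.dvd_of_mod_eq_zero h)
      omega
    · exact h
  obtain ⟨u, hu⟩ : ∃ u, w = 2 * u + 1 := ⟨w / 2, by omega⟩
  have h2n : 1 ≤ 2 ^ n := Nat.one_le_two_pow
  have hyeq : y = u * 2 ^ (n + 1) + (2 ^ n - 1) := by
    have h5 : 2 ^ n * w = u * 2 ^ (n + 1) + 2 ^ n := by rw [hu, pow_succ]; ring
    omega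
  have hxeq : x = blockNum n z u := by rw [blockNum_eq, hxy, hyeq]
  have hdiv : x / 2 ^ (z + n + 1) = u := by
    rw [hxeq]
    unfold blockNum
    rw [mul_comm u, Nat.mul_add_div (pow_pos two_pos _)]
    have hr : (2 ^ n - 1) * 2 ^ z < 2 ^ (z + n + 1) := by
      calc (2 ^ n - 1) * 2 ^ z < 2 ^ n * 2 ^ z :=
            (Nat.mul_lt_mul_right (pow_pos two_pos z)).mpr (by omega)
      _ ≤ 2 ^ (z + n + 1) := by
          rw [← pow_add]; exact Nat.pow_le_pow_right (by omega) (by omega)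
    rw [Nat.div_eq_of_lt hr, add_zero]
  rw [hdiv]
  exact ⟨hxeq, hn1⟩



def D (k : ℕ) : Finset ((_ : ℕ) × (_ : ℕ) × ℕ) :=
  (Icc 1 k).sigma (fun n => (range (2 * k - n + 1)).sigma
    (fun z => cntSet (2 * k - z - n - 1) (k - n)))

lemma mem_S_ne_zero {k x : ℕ} (hk : 1 ≤ k) (hx : x ∈ cntSet (2 * k) k) : x ≠ 0 := by
  rintro rfl
  have h := (mem_cntSet.mp hx).2
  simp at h
  omega

lemma blockNum_mem_S {k n z u : ℕ} (hk : 1 ≤ k)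
    (hp : (⟨n, z, u⟩ : (_ : ℕ) × (_ : ℕ) × ℕ) ∈ D k) :
    blockNum n z u ∈ cntSet (2 * k) k := by
  rw [D, Finset.mem_sigma, Finset.mem_sigma] at hp
  obtain ⟨hn, hz, hu⟩ := hp
  dsimp only at hn hz hu
  rw [Finset.mem_Icc] at hn
  rw [Finset.mem_range] at hz
  obtain ⟨hul, huc⟩ := mem_cntSet.mp hu
  refine mem_cntSet.mpr ⟨?_, ?_⟩
  · rw [lt_two_pow_iff_subset, blockNum_bitset]
    intro a ha
    simp only [blockSet, Finset.mem_union] at ha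
    rcases ha with h | h
    · obtain ⟨i, hi, rfl⟩ := Finset.mem_image.mp h
      rw [Finset.mem_range] at hi ⊢
      omega
    · obtain ⟨j, hj, rfl⟩ := Finset.mem_image.mp h
      have hjlt : j < 2 * k - z - n - 1 :=
        Finset.mem_range.mp (lt_two_pow_iff_subset.mp hul hj)
      rw [Finset.mem_range]
      omega
  · rw [blockNum_bitset, blockSet_card, huc]
    omega

lemma S_to_D {k x : ℕ} (hk : 1 ≤ k) (hx : x ∈ cntSet (2 * k) k) :
    (⟨lowBlockLen x, padicValNat 2 x, x / 2 ^ (padicValNat 2 x + lowBlockLen x + 1)⟩ :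
      (_ : ℕ) × (_ : ℕ) × ℕ) ∈ D k := by
  obtain ⟨hxe, hn1⟩ := decompose x (mem_S_ne_zero hk hx)
  set n := lowBlockLen x with hn
  set z := padicValNat 2 x with hz
  set u := x / 2 ^ (z + n + 1) with hu
  clear_value n z u
  obtain ⟨hxl, hxc⟩ := mem_cntSet.mp hx
  have hsub : (blockSet n z u) ⊆ range (2 * k) := by
    rw [← blockNum_bitset, ← hxe]; exact lt_two_pow_iff_subset.mp hxl
  have hcard : n + u.bitIndices.toFinset.card = k := by
    rw [← blockSet_card, ← blockNum_bitset, ← hxe]; exact hxc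
  have hzn : z + n ≤ 2 * k := by
    have h1 : (n - 1) + z ∈ blockSet n z u := by
      simp only [blockSet, Finset.mem_union]
      exact Or.inl (Finset.mem_image.mpr ⟨n - 1, Finset.mem_range.mpr (by omega), rfl⟩)
    have h2 := Finset.mem_range.mp (hsub h1)
    omega
  rw [D]
  refine Finset.mem_sigma.mpr ⟨Finset.mem_Icc.mpr ⟨hn1, by dsimp only; omega⟩,
    Finset.mem_sigma.mpr ⟨Finset.mem_range.mpr (by dsimp only; omega), ?_⟩⟩
  dsimp only
  refine mem_cntSet.mpr ⟨?_, by omega⟩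
  rw [lt_two_pow_iff_subset]
  intro j hj
  have h1 : j + (z + n + 1) ∈ blockSet n z u := by
    simp only [blockSet, Finset.mem_union]
    exact Or.inr (Finset.mem_image.mpr ⟨j, hj, rfl⟩)
  have h2 := Finset.mem_range.mp (hsub h1)
  exact Finset.mem_range.mpr (by omega)



lemma mem_D_one_le {k : ℕ} {p : (_ : ℕ) × (_ : ℕ) × ℕ} (hp : p ∈ D k) : 1 ≤ p.1 := by
  rw [D, Finset.mem_sigma] at hp
  exact (Finset.mem_Icc.mp hp.1).1

lemma sum_S_eq_sum_D (k : ℕ) (hk : 1 ≤ k) :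
    ∑ x ∈ cntSet (2 * k) k, lowBlockLen x = ∑ p ∈ D k, p.1 := by
  apply Finset.sum_nbij'
    (i := fun x => (⟨lowBlockLen x, padicValNat 2 x,
      x / 2 ^ (padicValNat 2 x + lowBlockLen x + 1)⟩ : (_ : ℕ) × (_ : ℕ) × ℕ))
    (j := fun p => blockNum p.1 p.2.1 p.2.2)
  · intro x hx; exact S_to_D hk hx
  · rintro ⟨n, z, u⟩ hp; exact blockNum_mem_S hk hp
  · intro x hx; exact ((decompose x (mem_S_ne_zero hk hx)).1).symm
  · rintro ⟨n, z, u⟩ hp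
    have h1 : 1 ≤ n := mem_D_one_le hp
    simp only [blockNum_lowBlockLen n z u h1, blockNum_padicVal n z u h1]
    rw [blockNum_div n z u h1]
  · intro x hx; rfl

lemma sum_D_eval (k : ℕ) (hk : 1 ≤ k) :
    ∑ p ∈ D k, p.1 =
      k + ∑ n ∈ Icc 1 k, n * Nat.choose (2 * k - n) (k - n + 1) := by
  rw [D, Finset.sum_sigma]
  have hstep : ∀ n ∈ Icc 1 k,
      (∑ q ∈ (range (2 * k - n + 1)).sigma (fun z => cntSet (2 * k - z - n - 1) (k - n)),
        n)
      = n * (Nat.choose (2 * k - n) (k - n + 1) + if n = k then 1 else 0) := by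
    intro n hn
    obtain ⟨hn1, hnk⟩ := Finset.mem_Icc.mp hn
    rw [Finset.sum_const, smul_eq_mul, mul_comm, Finset.card_sigma]
    congr 1
    -- ∑ z ∈ range (2k - n + 1), card (cntSet (2k - z - n -1) (k-n)) = C(2k-n, k-n+1) + ite
    have hM : 2 * k - n + 1 = (2 * k - n) + 1 := rfl
    simp_rw [cntSet_card]
    rw [Finset.sum_range_succ]
    have hlast : (2 * k - (2 * k - n) - n - 1) = 0 := by omega
    rw [hlast]
    congr 1
    · -- ∑ z ∈ range (2k - n), C(2k - z - n - 1, k - n) = C(2k - n, k - n + 1)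
      have hre : ∀ z ∈ range (2 * k - n),
          (2 * k - z - n - 1).choose (k - n) = ((2 * k - n) - 1 - z).choose (k - n) := by
        intro z hz; congr 1; omega
      rw [Finset.sum_congr rfl hre,
        Finset.sum_range_reflect (fun m => Nat.choose m (k - n)) (2 * k - n)]
      -- now ∑ m ∈ range (2k - n), C(m, k - n) = C(2k - n, k - n + 1)
      have hout : 2 * k - n = (2 * k - n - 1) + 1 := by omega
      rw [hout, ← Nat.sum_Icc_choose (2 * k - n - 1) (k - n), ← hout]
      refine (Finset.sum_subset ?_ ?_).symm
      · intro m hm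
        rw [Finset.mem_Icc] at hm
        rw [Finset.mem_range]
        omega
      · intro m hm hnm
        rw [Finset.mem_range] at hm
        have h9 : ¬ (k - n ≤ m ∧ m ≤ 2 * k - n - 1) := fun h => hnm (Finset.mem_Icc.mpr h)
        exact Nat.choose_eq_zero_of_lt (by omega)
      -- fix the outer choose argument: C(2k-n-1+1, k-n+1) = C(2k-n, k-n+1)
    · -- C(0, k - n) = if n = k then 1 else 0
      rcases eq_or_ne n k with h | h
      · simp [h]
      · rw [if_neg h, Nat.choose_eq_zero_of_lt (by omega)]
  rw [Finset.sum_congr rfl hstep]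
  rw [Finset.sum_congr rfl (fun n _ => mul_add n _ _), Finset.sum_add_distrib]
  simp only [mul_ite, mul_one, mul_zero]
  rw [Finset.sum_ite_eq' (Icc 1 k) k (fun n => n)]
  rw [if_pos (Finset.mem_Icc.mpr ⟨hk, le_refl k⟩)]
  omega

lemma lbl_le {k x : ℕ} (hk : 1 ≤ k) (hx : x ∈ cntSet (2 * k) k) :
    1 ≤ lowBlockLen x ∧ lowBlockLen x ≤ k := by
  obtain ⟨hxe, hn1⟩ := decompose x (mem_S_ne_zero hk hx)
  refine ⟨hn1, ?_⟩
  have hxc := (mem_cntSet.mp hx).2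
  rw [hxe, blockNum_bitset, blockSet_card] at hxc
  omega

lemma sum_S_eval (k : ℕ) (hk : 1 ≤ k) :
    ∑ x ∈ cntSet (2 * k) k, lowBlockLen x =
      k + ∑ n ∈ Icc 1 k, n * Nat.choose (2 * k - n) (k - n + 1) := by
  rw [sum_S_eq_sum_D k hk, sum_D_eval k hk]



lemma pow_sub_one_mem (k : ℕ) (hk : 1 ≤ k) : 2 ^ k - 1 ∈ cntSet (2 * k) k := by
  have hset : ((2 : ℕ) ^ k - 1).bitIndices.toFinset = range k := by
    rw [← sum_range_two_pow]
    exact Finset.toFinset_bitIndices_twoPowSum (range k)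
  refine mem_cntSet.mpr ⟨?_, by rw [hset, Finset.card_range]⟩
  have h1 : (2 : ℕ) ^ k ≤ 2 ^ (2 * k) := Nat.pow_le_pow_right (by omega) (by omega)
  have h2 : 1 ≤ (2 : ℕ) ^ k := Nat.one_le_two_pow
  omega

lemma pow_sub_one_min {k x : ℕ} (hk : 1 ≤ k) (hx : x ∈ cntSet (2 * k) k) :
    2 ^ k - 1 ≤ x := by
  obtain ⟨hxl, hxc⟩ := mem_cntSet.mp hx
  rcases lt_or_ge x (2 ^ k) with h | h
  · have hsub : x.bitIndices.toFinset ⊆ range k := lt_two_pow_iff_subset.mp h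
    have heq : x.bitIndices.toFinset = range k :=
      Finset.eq_of_subset_of_card_le hsub (by rw [Finset.card_range, hxc])
    have : x = 2 ^ k - 1 := by
      rw [← Finset.twoPowSum_toFinset_bitIndices x, heq, sum_range_two_pow]
    omega
  · have h2 : 1 ≤ (2 : ℕ) ^ k := Nat.one_le_two_pow
    omega

lemma lbl_pow_sub_one (k : ℕ) (hk : 1 ≤ k) : lowBlockLen (2 ^ k - 1) = k := by
  unfold lowBlockLen
  have h1 : 1 ≤ (2 : ℕ) ^ k := Nat.one_le_two_pow
  have h2 : (2 : ℕ) ∣ 2 ^ k := dvd_pow_self 2 (by omega)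
  have hodd : ((2 : ℕ) ^ k - 1) % 2 = 1 := by omega
  have hv0 : padicValNat 2 (2 ^ k - 1) = 0 :=
    padicValNat.eq_zero_of_not_dvd (by omega)
  rw [hv0, pow_zero, Nat.div_one,
    show 2 ^ k - 1 + 1 = 2 ^ k by omega, padicValNat.prime_pow]

lemma sum_getD (f : ℕ → ℕ) (L : List ℕ) :
    ∑ i ∈ range L.length, f (L.getD i 0) = (L.map f).sum := by
  induction L with
  | nil => simp
  | cons a T ih =>
    rw [List.length_cons, Finset.sum_range_succ']
    simp only [List.getD_cons_succ, List.getD_cons_zero, List.map_cons, List.sum_cons]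
    omega

lemma sort_getD_zero (s : Finset ℕ) (hs : s.Nonempty) :
    (s.sort (· ≤ ·)).getD 0 0 = s.min' hs := by
  have h0 : 0 < (s.sort (· ≤ ·)).length := by
    rw [Finset.length_sort]; exact Finset.card_pos.mpr hs
  rw [List.getD_eq_getElem _ _ h0]
  exact Finset.sorted_zero_eq_min'

lemma sort_sum (s : Finset ℕ) (f : ℕ → ℕ) :
    ((s.sort (· ≤ ·)).map f).sum = ∑ x ∈ s, f x := by
  rw [← Finset.sum_map_toList]
  exact List.Perm.sum_eq (List.Perm.map f (Finset.sort_perm_toList s _))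

theorem stmt_18 (k : ℕ) (hk : 1 ≤ k) (L : List ℕ)
    (hL : L = Finset.sort
      ((Finset.range (2 ^ (2 * k))).filter (fun z : ℕ =>
        ((Finset.range (2 * k)).filter (fun i => z.testBit i)).card = k)) (· ≤ ·)) :
    L.length = Nat.choose (2 * k) k ∧
    (∀ x ∈ L, 1 ≤ lowBlockLen x ∧ lowBlockLen x ≤ k) ∧
    (∑ t ∈ Finset.range (L.length - 2), lowBlockLen (L.getD (t + 1) 0))
        + lowBlockLen (L.getD (L.length - 1) 0)
      = ∑ n ∈ Finset.Icc 1 k, n * Nat.choose (2 * k - n) (k - n + 1) := by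
  have hLs : L = (cntSet (2 * k) k).sort (· ≤ ·) := hL
  have hlen : L.length = Nat.choose (2 * k) k := by
    rw [hLs, Finset.length_sort, cntSet_card]
  have hN2 : 2 ≤ L.length := by
    rw [hlen]
    obtain ⟨j, rfl⟩ : ∃ j, k = j + 1 := ⟨k - 1, by omega⟩
    have h1 : 0 < (2 * j + 1).choose j := Nat.choose_pos (by omega)
    have h2 : 0 < (2 * j + 1).choose (j + 1) := Nat.choose_pos (by omega)
    have h3 : 2 * (j + 1) = 2 * j + 1 + 1 := by omega
    rw [h3, Nat.choose_succ_succ]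
    simp only [Nat.succ_eq_add_one]
    omega
  refine ⟨hlen, ?_, ?_⟩
  · intro x hx
    exact lbl_le hk (by rwa [hLs, Finset.mem_sort] at hx)
  · -- boundary sum
    have htot : ∑ i ∈ range L.length, lowBlockLen (L.getD i 0) =
        k + ∑ n ∈ Icc 1 k, n * Nat.choose (2 * k - n) (k - n + 1) := by
      rw [sum_getD, hLs, sort_sum, sum_S_eval k hk]
    have hfirst : lowBlockLen (L.getD 0 0) = k := by
      have hget : L.getD 0 0 = (cntSet (2 * k) k).min'
          ⟨2 ^ k - 1, pow_sub_one_mem k hk⟩ := by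
        rw [hLs]
        exact sort_getD_zero _ _
      have hmin : (cntSet (2 * k) k).min' ⟨2 ^ k - 1, pow_sub_one_mem k hk⟩ = 2 ^ k - 1 :=
        le_antisymm (Finset.min'_le _ _ (pow_sub_one_mem k hk))
          (Finset.le_min' _ _ _ (fun y hy => pow_sub_one_min hk hy))
      rw [hget, hmin, lbl_pow_sub_one k hk]
    have hsplit : ∑ i ∈ range L.length, lowBlockLen (L.getD i 0) =
        lowBlockLen (L.getD 0 0) +
        ((∑ t ∈ range (L.length - 2), lowBlockLen (L.getD (t + 1) 0)) +
          lowBlockLen (L.getD (L.length - 1) 0)) := by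
      have h1 : L.length = (L.length - 1) + 1 := by omega
      have h2 : L.length - 1 = (L.length - 2) + 1 := by omega
      conv_lhs => rw [h1]
      rw [Finset.sum_range_succ' (fun i => lowBlockLen (L.getD i 0)) (L.length - 1)]
      conv_lhs => rw [h2]
      rw [Finset.sum_range_succ (fun i => lowBlockLen (L.getD (i + 1) 0)) (L.length - 2)]
      rw [← h2]
      omega
    omega
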